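/- Let u_1,...,u_m and v_1,...,v_m be complex numbers with u_i v_j ≠ -1 for all i,j. Then det[(u_i + v_j)/(1 + u_i v_j)]_{1≤i,j≤m} = (1/2)·(∏_{i=1}^m (1+u_i)(1+v_i) + (-1)^m ∏_{i=1}^m (1-u_i)(1-v_i)) · ∏_{1≤i<j≤m} (u_i - u_j)(v_j - v_i) · ∏_{i=1}^m ∏_{j=1}^m (1 + u_i v_j)^{-1}. -/

import Mathlib

open Matrix Finset

variable {n : Type*} [DecidableEq n] [Fintype n]

def addRows (M : Matrix n n ℂ) (w : n → ℂ) (s : Finset n) : Matrix n n ℂ :=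
  Matrix.of fun i j => M i j + if i ∈ s then w j else 0

omit [Fintype n] in
lemma addRows_empty (M : Matrix n n ℂ) (w : n → ℂ) : addRows M w ∅ = M := by
  ext i j; simp [addRows]

lemma detB (M : Matrix n n ℂ) (w : n → ℂ) (a : n) :
    ∀ s : Finset n, a ∉ s → ((addRows M w s).updateRow a w).det = (M.updateRow a w).det := by
  intro s
  induction s using Finset.induction_on with
  | empty => intro _; rw [addRows_empty]
  | @insert b s hb ih =>
    intro ha
    have hab : a ≠ b := fun h => ha (h ▸ Finset.mem_insert_self b s)
    have has : a ∉ s := fun h => ha (Finset.mem_insert_of_mem h)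
    have key : (addRows M w (insert b s)).updateRow a w
        = (((addRows M w s).updateRow a w).updateRow b (M b + w)) := by
      ext i j
      by_cases hib : i = b
      · subst hib
        simp [Matrix.updateRow_apply, hab.symm, addRows, hb]
      · by_cases hia : i = a
        · subst hia; simp [Matrix.updateRow_apply, hib]
        · simp [Matrix.updateRow_apply, hia, hib, addRows, Finset.mem_insert]
    rw [key, Matrix.det_updateRow_add]
    have e1 : ((addRows M w s).updateRow a w).updateRow b (M b)
        = (addRows M w s).updateRow a w := by
      ext i j
      by_cases hib : i = b
      · subst hib
        simp [Matrix.updateRow_apply, hab.symm, addRows, hb]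
      · simp [Matrix.updateRow_apply, hib]
    have e2 : (((addRows M w s).updateRow a w).updateRow b w).det = 0 := by
      apply Matrix.det_zero_of_row_eq hab
      rw [Matrix.updateRow_ne hab, Matrix.updateRow_self, Matrix.updateRow_self]
    rw [e2, add_zero, e1, ih has]

lemma detA (M : Matrix n n ℂ) (w : n → ℂ) :
    ∀ s : Finset n, (addRows M w s).det = M.det + ∑ i ∈ s, (M.updateRow i w).det := by
  intro s
  induction s using Finset.induction_on with
  | empty => rw [addRows_empty]; simp
  | @insert a s ha ih =>
    have key : addRows M w (insert a s)
        = (addRows M w s).updateRow a (M a + w) := by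
      ext i j
      by_cases hia : i = a
      · subst hia; simp [Matrix.updateRow_apply, addRows, ha]
      · simp [Matrix.updateRow_apply, hia, addRows, Finset.mem_insert]
    rw [key, Matrix.det_updateRow_add]
    have e1 : (addRows M w s).updateRow a (M a) = addRows M w s := by
      ext i j
      by_cases hia : i = a
      · subst hia; simp [Matrix.updateRow_apply, addRows, ha]
      · simp [Matrix.updateRow_apply, hia]
    rw [e1, ih, detB M w a s ha, Finset.sum_insert ha]
    ring

lemma det_plus_add_det_minus (M : Matrix n n ℂ) (w : n → ℂ) :
    (Matrix.of fun i j => M i j + w j).det + (Matrix.of fun i j => M i j - w j).det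
      = 2 * M.det := by
  have h1 : (Matrix.of fun i j => M i j + w j) = addRows M w Finset.univ := by
    ext i j; simp [addRows]
  have h2 : (Matrix.of fun i j => M i j - w j) = addRows M (-w) Finset.univ := by
    ext i j; simp [addRows, sub_eq_add_neg]
  have h3 : ∀ i, (M.updateRow i (-w)).det = - (M.updateRow i w).det := by
    intro i
    have : -w = (-1 : ℂ) • w := by ext j; simp
    rw [this, Matrix.det_updateRow_smul]; simp
  rw [h1, h2, detA, detA, Finset.sum_congr rfl (fun i _ => h3 i)]
  simp
  ring


lemma prod_Ioi_last {m : ℕ} (f : Fin (m+1) → ℂ) :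
    ∏ j ∈ Ioi (Fin.last m), f j = 1 :=
  Finset.prod_eq_one fun j hj => absurd (Finset.mem_Ioi.1 hj) (not_lt.2 (Fin.le_last j))

lemma Ioi_castSucc_eq {m : ℕ} (i : Fin m) :
    Ioi (Fin.castSucc i) = insert (Fin.last m) ((Ioi i).map Fin.castSuccEmb) := by
  ext k
  simp only [Finset.mem_Ioi, Finset.mem_insert, Finset.mem_map]
  constructor
  · intro hk
    rcases Fin.eq_castSucc_or_eq_last k with ⟨j, rfl⟩ | rfl
    · exact Or.inr ⟨j, Fin.castSucc_lt_castSucc_iff.1 hk, rfl⟩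
    · exact Or.inl rfl
  · rintro (rfl | ⟨j, hj, rfl⟩)
    · exact Fin.castSucc_lt_last i
    · exact Fin.castSucc_lt_castSucc_iff.2 hj

lemma prod_Ioi_castSucc {m : ℕ} (f : Fin (m+1) → ℂ) (i : Fin m) :
    ∏ j ∈ Ioi (Fin.castSucc i), f j
      = (∏ j ∈ Ioi i, f j.castSucc) * f (Fin.last m) := by
  rw [Ioi_castSucc_eq, Finset.prod_insert, Finset.prod_map]
  · rw [mul_comm]; rfl
  · simp only [Finset.mem_map]
    rintro ⟨j, _, hj⟩
    exact absurd hj (Fin.castSucc_lt_last j).ne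

lemma prod_prod_Ioi_split {m : ℕ} (g : Fin (m+1) → Fin (m+1) → ℂ) :
    ∏ i, ∏ j ∈ Ioi i, g i j
      = (∏ i : Fin m, ∏ j ∈ Ioi i, g i.castSucc j.castSucc)
        * ∏ i : Fin m, g i.castSucc (Fin.last m) := by
  rw [Fin.prod_univ_castSucc, prod_Ioi_last, mul_one, ← Finset.prod_mul_distrib]
  exact Finset.prod_congr rfl fun i _ => prod_Ioi_castSucc _ i

lemma prod_prod_univ_split {m : ℕ} (g : Fin (m+1) → Fin (m+1) → ℂ) :
    ∏ i, ∏ j, g i j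
      = ((∏ i : Fin m, ∏ j : Fin m, g i.castSucc j.castSucc)
        * ∏ i : Fin m, g i.castSucc (Fin.last m))
        * ((∏ j : Fin m, g (Fin.last m) j.castSucc) * g (Fin.last m) (Fin.last m)) := by
  rw [Fin.prod_univ_castSucc]
  congr 1
  · rw [← Finset.prod_mul_distrib]
    exact Finset.prod_congr rfl fun i _ => Fin.prod_univ_castSucc _
  · exact Fin.prod_univ_castSucc _

lemma cauchyK : ∀ (m : ℕ) (x y : Fin m → ℂ), (∀ i j, 1 + x i * y j ≠ 0) →
    (Matrix.of fun i j => (1 + x i * y j)⁻¹).det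
      = (∏ i, ∏ j ∈ Ioi i, (x i - x j) * (y j - y i)) * ∏ i, ∏ j, (1 + x i * y j)⁻¹ := by
  intro m
  induction m with
  | zero => intro x y h; simp [Matrix.det_fin_zero]
  | succ m ih =>
    intro x y h
    set L := Fin.last m with hL
    set K : Matrix (Fin (m+1)) (Fin (m+1)) ℂ := Matrix.of fun i j => (1 + x i * y j)⁻¹ with hK
    set E : Matrix (Fin (m+1)) (Fin (m+1)) ℂ :=
      Matrix.of fun i j => if i = j then 1 else if j = L then -1 else 0 with hE
    set F : Matrix (Fin (m+1)) (Fin (m+1)) ℂ :=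
      Matrix.of fun i j => if i = j then 1 else if i = L then -1 else 0 with hF
    set M3 : Matrix (Fin (m+1)) (Fin (m+1)) ℂ :=
      Matrix.of fun i j => if i = L then 1 else y j * (1 + x i * y j)⁻¹ with hM3
    set M4 : Matrix (Fin (m+1)) (Fin (m+1)) ℂ :=
      Matrix.of fun i j => if i = L then (if j = L then 1 else 0)
        else (if j = L then y L * (1 + x i * y L)⁻¹
          else (y j - y L) * ((1 + x i * y j)⁻¹ * (1 + x i * y L)⁻¹)) with hM4
    set K' : Matrix (Fin m) (Fin m) ℂ :=
      Matrix.of fun i j => (1 + x i.castSucc * y j.castSucc)⁻¹ with hK'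
    have detE : E.det = 1 := by
      rw [Matrix.det_of_upperTriangular]
      · simp [hE, Matrix.of_apply]
      · intro i j hij
        have hij' : j < i := hij
        have hjL : j ≠ L := fun hh => absurd (lt_of_eq_of_lt hh.symm hij') (not_lt.2 (Fin.le_last i))
        simp only [hE, Matrix.of_apply]
        rw [if_neg (fun hh => absurd hh.symm (ne_of_lt hij')), if_neg hjL]
    have detF : F.det = 1 := by
      rw [Matrix.det_of_lowerTriangular]
      · simp [hF, Matrix.of_apply]
      · intro i j hij
        have hij' : i < j := hij
        have hiL : i ≠ L := fun hh => absurd (lt_of_eq_of_lt hh.symm hij') (not_lt.2 (Fin.le_last j))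
        simp only [hF, Matrix.of_apply]
        rw [if_neg (ne_of_lt hij'), if_neg hiL]
    -- step 1
    have step1 : E * K = Matrix.diagonal (fun i => if i = L then 1 else x L - x i)
        * (M3 * Matrix.diagonal (fun j => (1 + x L * y j)⁻¹)) := by
      ext i j
      rw [Matrix.mul_apply]
      have rhs_eq : (Matrix.diagonal (fun i => if i = L then 1 else x L - x i)
          * (M3 * Matrix.diagonal (fun j => (1 + x L * y j)⁻¹))) i j
          = (if i = L then 1 else x L - x i) * (M3 i j * (1 + x L * y j)⁻¹) := by
        rw [Matrix.diagonal_mul, Matrix.mul_diagonal]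
      rw [rhs_eq]
      have lhs_eq : ∑ k, E i k * K k j = K i j + (if i = L then 0 else - K L j) := by
        by_cases hi : i = L
        · subst hi
          rw [Finset.sum_eq_single L]
          · simp [hE, hK]
          · intro k _ hk
            simp [hE, Ne.symm hk, hk]
          · simp
        · rw [Finset.sum_eq_add_of_mem i L (Finset.mem_univ i) (Finset.mem_univ L) hi ?_]
          · simp only [hE, hK, Matrix.of_apply, if_pos rfl, if_neg hi]
            simp only [if_true, eq_self_iff_true]
            ring
          · intro k hk1 hk2
            simp only [hE, Matrix.of_apply]
            rw [if_neg (fun hh => hk2.1 hh.symm), if_neg hk2.2, zero_mul]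
      rw [lhs_eq]
      by_cases hi : i = L
      · subst hi
        simp [hM3, hK]
      · rw [if_neg hi, if_neg hi]
        simp only [hM3, hK, Matrix.of_apply, if_neg hi]
        have h1 := h i j
        have h2 := h L j
        have e1 := mul_inv_cancel₀ h1
        have e2 := mul_inv_cancel₀ h2
        linear_combination (-(1 + x i * y j)⁻¹) * e2 + (1 + x L * y j)⁻¹ * e1
    -- step 2
    have step2 : M3 * F = M4 := by
      ext i j
      rw [Matrix.mul_apply]
      have lhs_eq : ∑ k, M3 i k * F k j = M3 i j + (if j = L then 0 else - M3 i L) := by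
        by_cases hj : j = L
        · subst hj
          rw [Finset.sum_eq_single L]
          · simp [hF]
          · intro k _ hk
            simp [hF, hk, Ne.symm hk]
          · simp
        · rw [Finset.sum_eq_add_of_mem j L (Finset.mem_univ j) (Finset.mem_univ L) hj ?_]
          · have hLj : L ≠ j := fun hh => hj hh.symm
            simp only [hF, Matrix.of_apply, if_pos rfl, if_neg hLj, if_neg hj]
            simp only [if_true, eq_self_iff_true]
            ring
          · intro k hk1 hk2
            simp only [hF, Matrix.of_apply]
            rw [if_neg hk2.1, if_neg hk2.2, mul_zero]
      rw [lhs_eq]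
      by_cases hi : i = L
      · subst hi
        by_cases hj : j = L
        · subst hj; simp [hM3, hM4]
        · simp [hM3, hM4, hj]
      · by_cases hj : j = L
        · subst hj; simp [hM3, hM4, hi]
        · simp only [hM3, hM4, Matrix.of_apply, if_neg hi, if_neg hj]
          have h1 := h i j
          have h2 := h i L
          have e1 := mul_inv_cancel₀ h1
          have e2 := mul_inv_cancel₀ h2
          linear_combination (-(y j * (1 + x i * y j)⁻¹)) * e2 + y L * (1 + x i * y L)⁻¹ * e1
    -- step 3 : det M4
    have step3 : M4.det = (Matrix.of fun i j : Fin m =>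
        (y j.castSucc - y L) * ((1 + x i.castSucc * y j.castSucc)⁻¹
          * (1 + x i.castSucc * y L)⁻¹)).det := by
      rw [Matrix.det_succ_row M4 L]
      rw [Finset.sum_eq_single L]
      · have hMLL : M4 L L = 1 := by simp [hM4]
        have hsign : (-1 : ℂ) ^ ((L : ℕ) + (L : ℕ)) = 1 := by
          rw [hL]
          simpa using Even.neg_one_pow (n := (m + m)) ⟨m, rfl⟩
        rw [hMLL, hsign]
        simp only [one_mul, mul_one]
        congr 1
        ext i j
        have : L.succAbove = Fin.castSucc := by rw [hL, Fin.succAbove_last]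
        simp only [Matrix.submatrix_apply, this, hM4, Matrix.of_apply,
          if_neg (show i.castSucc ≠ L from (Fin.castSucc_lt_last i).ne),
          if_neg (show j.castSucc ≠ L from (Fin.castSucc_lt_last j).ne)]
      · intro j _ hjL
        have : M4 L j = 0 := by simp [hM4, hjL]
        rw [this]; ring
      · simp
    -- step 4: factor the inner matrix
    have step4 : (Matrix.of fun i j : Fin m =>
        (y j.castSucc - y L) * ((1 + x i.castSucc * y j.castSucc)⁻¹
          * (1 + x i.castSucc * y L)⁻¹)).det
        = (∏ i : Fin m, (1 + x i.castSucc * y L)⁻¹)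
          * ((∏ j : Fin m, (y j.castSucc - y L)) * K'.det) := by
      have : (Matrix.of fun i j : Fin m =>
          (y j.castSucc - y L) * ((1 + x i.castSucc * y j.castSucc)⁻¹
            * (1 + x i.castSucc * y L)⁻¹))
          = Matrix.diagonal (fun i : Fin m => (1 + x i.castSucc * y L)⁻¹)
            * (K' * Matrix.diagonal (fun j : Fin m => y j.castSucc - y L)) := by
        ext i j
        rw [Matrix.diagonal_mul, Matrix.mul_diagonal]
        simp only [hK', Matrix.of_apply]
        ring
      rw [this, Matrix.det_mul, Matrix.det_mul, Matrix.det_diagonal, Matrix.det_diagonal]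
      ring
    -- combine determinants
    have detM3 : M3.det = M4.det := by
      rw [← step2, Matrix.det_mul, detF, mul_one]
    have detK_eq : K.det = (∏ i : Fin (m+1), if i = L then 1 else x L - x i)
        * (M4.det * ∏ j : Fin (m+1), (1 + x L * y j)⁻¹) := by
      have h1 : (E * K).det = K.det := by rw [Matrix.det_mul, detE, one_mul]
      rw [← h1, step1, Matrix.det_mul, Matrix.det_mul, Matrix.det_diagonal,
        Matrix.det_diagonal, detM3]
    -- apply IH
    have ihK' : K'.det = (∏ i : Fin m, ∏ j ∈ Ioi i,
          (x i.castSucc - x j.castSucc) * (y j.castSucc - y i.castSucc))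
        * ∏ i : Fin m, ∏ j : Fin m, (1 + x i.castSucc * y j.castSucc)⁻¹ :=
      ih (fun i => x i.castSucc) (fun j => y j.castSucc) (fun i j => h _ _)
    -- final assembly
    rw [detK_eq, step3, step4, ihK']
    rw [prod_prod_Ioi_split (fun i j => (x i - x j) * (y j - y i)),
      prod_prod_univ_split (fun i j => (1 + x i * y j)⁻¹)]
    have hP : (∏ i : Fin (m+1), if i = L then 1 else x L - x i)
        = ∏ i : Fin m, (x L - x i.castSucc) := by
      rw [Fin.prod_univ_castSucc, if_pos rfl, mul_one]
      exact Finset.prod_congr rfl fun i _ => if_neg (Fin.castSucc_lt_last i).ne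
    have hQ : (∏ j : Fin (m+1), (1 + x L * y j)⁻¹)
        = (∏ j : Fin m, (1 + x L * y j.castSucc)⁻¹) * (1 + x L * y L)⁻¹ :=
      Fin.prod_univ_castSucc _
    rw [hP, hQ]
    have hPS : (∏ i : Fin m, (x L - x i.castSucc)) * ∏ j : Fin m, (y j.castSucc - y L)
        = ∏ i : Fin m, (x i.castSucc - x L) * (y L - y i.castSucc) := by
      rw [← Finset.prod_mul_distrib]
      exact Finset.prod_congr rfl fun i _ => by ring
    simp only [← hL]
    rw [← hPS]
    ring


theorem cauchy_like_det (m : ℕ) (hm : 0 < m) (u v : Fin m → ℂ)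
    (h : ∀ i j, u i * v j ≠ -1) :
    (Matrix.of fun i j : Fin m => (u i + v j) / (1 + u i * v j)).det =
      (1 / 2) *
        (∏ i, (1 + u i) * (1 + v i) + (-1 : ℂ) ^ m * ∏ i, (1 - u i) * (1 - v i)) *
        (∏ i, ∏ j ∈ Ioi i, (u i - u j) * (v j - v i)) *
        ∏ i, ∏ j, (1 + u i * v j)⁻¹ := by
  have hnz : ∀ i j, 1 + u i * v j ≠ 0 := by
    intro i j hc
    exact h i j (by linear_combination hc)
  set M : Matrix (Fin m) (Fin m) ℂ :=
    Matrix.of fun i j : Fin m => (u i + v j) / (1 + u i * v j) with hM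
  set K : Matrix (Fin m) (Fin m) ℂ := Matrix.of fun i j => (1 + u i * v j)⁻¹ with hK
  set A : Matrix (Fin m) (Fin m) ℂ :=
    Matrix.of fun i j => (1 + u i) * ((1 + u i * v j)⁻¹ * (1 + v j)) with hA
  set B : Matrix (Fin m) (Fin m) ℂ :=
    Matrix.of fun i j => (1 - u i) * ((1 + u i * v j)⁻¹ * (1 - v j)) with hB
  have key := det_plus_add_det_minus M (fun _ => (1 : ℂ))
  have e1 : (Matrix.of fun i j => M i j + (1 : ℂ)) = A := by
    ext i j
    have h0 := hnz i j
    simp only [hM, hA, Matrix.of_apply]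
    field_simp
    ring
  have e2 : (Matrix.of fun i j => M i j - (1 : ℂ)) = -B := by
    ext i j
    have h0 := hnz i j
    simp only [hM, hB, Matrix.of_apply, Matrix.neg_apply]
    field_simp
    ring
  rw [e1, e2, Matrix.det_neg] at key
  -- factor A and B through K
  have hdetA : A.det = (∏ i, (1 + u i)) * (K.det * ∏ j, (1 + v j)) := by
    have : A = Matrix.diagonal (fun i => 1 + u i)
        * (K * Matrix.diagonal (fun j => 1 + v j)) := by
      ext i j
      rw [Matrix.diagonal_mul, Matrix.mul_diagonal]
      simp only [hA, hK, Matrix.of_apply]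
    rw [this, Matrix.det_mul, Matrix.det_mul, Matrix.det_diagonal, Matrix.det_diagonal]
  have hdetB : B.det = (∏ i, (1 - u i)) * (K.det * ∏ j, (1 - v j)) := by
    have : B = Matrix.diagonal (fun i => 1 - u i)
        * (K * Matrix.diagonal (fun j => 1 - v j)) := by
      ext i j
      rw [Matrix.diagonal_mul, Matrix.mul_diagonal]
      simp only [hB, hK, Matrix.of_apply]
    rw [this, Matrix.det_mul, Matrix.det_mul, Matrix.det_diagonal, Matrix.det_diagonal]
  have hdetK : K.det = (∏ i, ∏ j ∈ Ioi i, (u i - u j) * (v j - v i))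
      * ∏ i, ∏ j, (1 + u i * v j)⁻¹ := cauchyK m u v hnz
  have hcard : Fintype.card (Fin m) = m := Fintype.card_fin m
  rw [hcard] at key
  have hMdet : M.det = (1 / 2) * (A.det + (-1 : ℂ) ^ m * B.det) := by
    rw [key]; ring
  rw [hMdet, hdetA, hdetB, hdetK,
    show (∏ i, (1 + u i) * (1 + v i)) = (∏ i, (1 + u i)) * (∏ i, (1 + v i)) from
      Finset.prod_mul_distrib,
    show (∏ i, (1 - u i) * (1 - v i)) = (∏ i, (1 - u i)) * (∏ i, (1 - v i)) from
      Finset.prod_mul_distrib]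
  ring
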